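/- Let t ≥ 1 and μ ≥ 1. Let N₁, N₂ be real symmetric positive definite t×t matrices and B₁, B₂, O₁, O₂ real symmetric positive semidefinite t×t matrices with B₁·O₁ = 0 and B₂·O₂ = 0. Define the enhanced noise covariances N₁' = (N₁⁻¹ + O₁)⁻¹ and N₂' = ((B₁+N₂)⁻¹ + (1/μ)O₂)⁻¹ − B₁. Then: (1) N₁ − N₁' and N₂ − N₂' are positive semidefinite (enhancement); and (2) det(B₁ + N₁')·det(N₁) = det(B₁ + N₁)·det(N₁') and det(B₁ + B₂ + N₂')·det(B₁ + N₂) = det(B₁ + B₂ + N₂)·det(B₁ + N₂') (rate preservation). -/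

import Mathlib

open Matrix

private lemma my_smul_psd {n : ℕ} {c : ℝ} (hc : 0 ≤ c) {M : Matrix (Fin n) (Fin n) ℝ}
    (hM : M.PosSemidef) : (c • M).PosSemidef := by
  refine .of_dotProduct_mulVec_nonneg ?_ fun x => ?_
  · unfold Matrix.IsHermitian
    rw [conjTranspose_smul, hM.1]
    simp
  · rw [smul_mulVec, dotProduct_smul, smul_eq_mul]
    exact mul_nonneg hc (hM.dotProduct_mulVec_nonneg x)

/-- Loewner antitonicity of the inverse. -/
private lemma inv_sub_inv_psd {n : ℕ} {X Y : Matrix (Fin n) (Fin n) ℝ}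
    (hX : X.PosDef) (hY : Y.PosDef) (h : (Y - X).PosSemidef) :
    (X⁻¹ - Y⁻¹).PosSemidef := by
  have hXu' : IsUnit X.det := isUnit_iff_ne_zero.mpr hX.det_pos.ne'
  have hYu' : IsUnit Y.det := isUnit_iff_ne_zero.mpr hY.det_pos.ne'
  have hXi : X * X⁻¹ = 1 := Matrix.mul_nonsing_inv _ hXu'
  have hYi : Y * Y⁻¹ = 1 := Matrix.mul_nonsing_inv _ hYu'
  have hXsym : Xᵀ = X := by
    have h' := hX.isHermitian
    rwa [Matrix.IsHermitian, Matrix.conjTranspose_eq_transpose_of_trivial] at h'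
  refine .of_dotProduct_mulVec_nonneg (hX.inv.isHermitian.sub hY.inv.isHermitian) fun x => ?_
  set z : Fin n → ℝ := Y⁻¹ *ᵥ x with hz
  set u : Fin n → ℝ := X⁻¹ *ᵥ x with hu
  have hYz : Y *ᵥ z = x := by rw [hz, mulVec_mulVec, hYi, one_mulVec]
  have hXu : X *ᵥ u = x := by rw [hu, mulVec_mulVec, hXi, one_mulVec]
  have h1 : 0 ≤ (z - u) ⬝ᵥ (X *ᵥ (z - u)) := by
    have := hX.posSemidef.dotProduct_mulVec_nonneg (z - u); rwa [star_trivial] at this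
  have h2 : 0 ≤ z ⬝ᵥ ((Y - X) *ᵥ z) := by
    have := h.dotProduct_mulVec_nonneg z; rwa [star_trivial] at this
  have huXz : u ⬝ᵥ (X *ᵥ z) = x ⬝ᵥ z := by
    rw [dotProduct_mulVec, ← Matrix.mulVec_transpose, hXsym, hXu]
  have hzXu : z ⬝ᵥ (X *ᵥ u) = z ⬝ᵥ x := by rw [hXu]
  have huXu : u ⬝ᵥ (X *ᵥ u) = u ⬝ᵥ x := by rw [hXu]
  have hzYz : z ⬝ᵥ (Y *ᵥ z) = z ⬝ᵥ x := by rw [hYz]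
  have hgoal : x ⬝ᵥ ((X⁻¹ - Y⁻¹) *ᵥ x) = x ⬝ᵥ u - x ⬝ᵥ z := by
    rw [sub_mulVec, dotProduct_sub, ← hu, ← hz]
  have e1 : (z - u) ⬝ᵥ (X *ᵥ (z - u))
      = z ⬝ᵥ (X *ᵥ z) - u ⬝ᵥ (X *ᵥ z) - (z ⬝ᵥ (X *ᵥ u) - u ⬝ᵥ (X *ᵥ u)) := by
    simp only [mulVec_sub, sub_dotProduct, dotProduct_sub]
  have e2 : z ⬝ᵥ ((Y - X) *ᵥ z) = z ⬝ᵥ (Y *ᵥ z) - z ⬝ᵥ (X *ᵥ z) := by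
    simp only [sub_mulVec, dotProduct_sub]
  have key : x ⬝ᵥ ((X⁻¹ - Y⁻¹) *ᵥ x)
      = (z - u) ⬝ᵥ (X *ᵥ (z - u)) + z ⬝ᵥ ((Y - X) *ᵥ z) := by
    rw [hgoal, e1, e2, huXz, hzXu, huXu, hzYz, dotProduct_comm z x, dotProduct_comm u x]
    ring
  rw [star_trivial, key]
  exact add_nonneg h1 h2

theorem stmt_13 (t : ℕ) (ht : 1 ≤ t) (μ : ℝ) (hμ : 1 ≤ μ)
    (N₁ N₂ B₁ B₂ O₁ O₂ : Matrix (Fin t) (Fin t) ℝ)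
    (hN₁ : N₁.PosDef) (hN₂ : N₂.PosDef)
    (hB₁ : B₁.PosSemidef) (hB₂ : B₂.PosSemidef)
    (hO₁ : O₁.PosSemidef) (hO₂ : O₂.PosSemidef)
    (hBO₁ : B₁ * O₁ = 0) (hBO₂ : B₂ * O₂ = 0)
    (N₁' N₂' : Matrix (Fin t) (Fin t) ℝ)
    (hN₁' : N₁' = (N₁⁻¹ + O₁)⁻¹)
    (hN₂' : N₂' = ((B₁ + N₂)⁻¹ + (1 / μ) • O₂)⁻¹ - B₁) :
    (N₁ - N₁').PosSemidef ∧ (N₂ - N₂').PosSemidef ∧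
      (B₁ + N₁').det * N₁.det = (B₁ + N₁).det * N₁'.det ∧
      (B₁ + B₂ + N₂').det * (B₁ + N₂).det
        = (B₁ + B₂ + N₂).det * (B₁ + N₂').det := by
  have hμ0 : (0:ℝ) ≤ 1 / μ := by positivity
  have hA : (N₁⁻¹ + O₁).PosDef := hN₁.inv.add_posSemidef hO₁
  have hY : (B₁ + N₂).PosDef := Matrix.PosDef.posSemidef_add hB₁ hN₂
  have hS : ((B₁ + N₂)⁻¹ + (1 / μ) • O₂).PosDef :=
    hY.inv.add_posSemidef (my_smul_psd hμ0 hO₂)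
  have hN1u : IsUnit N₁.det := isUnit_iff_ne_zero.mpr hN₁.det_pos.ne'
  have hYu : IsUnit (B₁ + N₂).det := isUnit_iff_ne_zero.mpr hY.det_pos.ne'
  have hAu : IsUnit (N₁⁻¹ + O₁).det := isUnit_iff_ne_zero.mpr hA.det_pos.ne'
  have hSu : IsUnit ((B₁ + N₂)⁻¹ + (1 / μ) • O₂).det :=
    isUnit_iff_ne_zero.mpr hS.det_pos.ne'
  have hN1inv' : N₁⁻¹ * N₁ = 1 := Matrix.nonsing_inv_mul _ hN1u
  have hYY : (B₁ + N₂)⁻¹⁻¹ = B₁ + N₂ := Matrix.nonsing_inv_nonsing_inv _ hYu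
  have hN1N1 : N₁⁻¹⁻¹ = N₁ := Matrix.nonsing_inv_nonsing_inv _ hN1u
  refine ⟨?_, ?_, ?_, ?_⟩
  · -- N₁ - N₁' psd
    have := inv_sub_inv_psd hN₁.inv hA (by simpa using hO₁)
    rw [hN1N1] at this
    rw [hN₁']
    exact this
  · -- N₂ - N₂' psd
    have := inv_sub_inv_psd hY.inv hS (by simpa using my_smul_psd hμ0 hO₂)
    rw [hYY] at this
    rw [hN₂']
    have heq : N₂ - (((B₁ + N₂)⁻¹ + (1 / μ) • O₂)⁻¹ - B₁)
        = (B₁ + N₂) - ((B₁ + N₂)⁻¹ + (1 / μ) • O₂)⁻¹ := by abel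
    rw [heq]
    exact this
  · -- first determinant identity
    have hAinv : ((N₁⁻¹ + O₁)⁻¹ * (N₁⁻¹ + O₁)) = 1 := Matrix.nonsing_inv_mul _ hAu
    have key1 : (B₁ + (N₁⁻¹ + O₁)⁻¹) * (N₁⁻¹ + O₁) = B₁ * N₁⁻¹ + 1 := by
      rw [add_mul, hAinv, mul_add, hBO₁, add_zero]
    have key2 : (B₁ * N₁⁻¹ + 1) * N₁ = B₁ + N₁ := by
      rw [add_mul, one_mul, mul_assoc, hN1inv', mul_one]
    have d1 : (B₁ + (N₁⁻¹ + O₁)⁻¹).det * (N₁⁻¹ + O₁).det * N₁.det = (B₁ + N₁).det := by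
      rw [← det_mul, key1, ← det_mul, key2]
    have d2 : (N₁⁻¹ + O₁)⁻¹.det * (N₁⁻¹ + O₁).det = 1 := by
      rw [← det_mul, hAinv, det_one]
    rw [hN₁']
    calc (B₁ + (N₁⁻¹ + O₁)⁻¹).det * N₁.det
        = (B₁ + (N₁⁻¹ + O₁)⁻¹).det * N₁.det * ((N₁⁻¹ + O₁)⁻¹.det * (N₁⁻¹ + O₁).det) := by
          rw [d2, mul_one]
      _ = ((B₁ + (N₁⁻¹ + O₁)⁻¹).det * (N₁⁻¹ + O₁).det * N₁.det) * (N₁⁻¹ + O₁)⁻¹.det := by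
          ring
      _ = (B₁ + N₁).det * (N₁⁻¹ + O₁)⁻¹.det := by rw [d1]
  · -- second determinant identity
    rw [hN₂']
    have h1 : B₁ + B₂ + (((B₁ + N₂)⁻¹ + (1 / μ) • O₂)⁻¹ - B₁)
        = B₂ + ((B₁ + N₂)⁻¹ + (1 / μ) • O₂)⁻¹ := by abel
    have h2 : B₁ + (((B₁ + N₂)⁻¹ + (1 / μ) • O₂)⁻¹ - B₁)
        = ((B₁ + N₂)⁻¹ + (1 / μ) • O₂)⁻¹ := by abel
    rw [h1, h2]
    set S := (B₁ + N₂)⁻¹ + (1 / μ) • O₂ with hSdef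
    have hSinv : S⁻¹ * S = 1 := Matrix.nonsing_inv_mul _ hSu
    have hYinv' : (B₁ + N₂)⁻¹ * (B₁ + N₂) = 1 := Matrix.nonsing_inv_mul _ hYu
    have hBcO : B₂ * ((1 / μ) • O₂) = 0 := by
      rw [Matrix.mul_smul, hBO₂, smul_zero]
    have key1 : (B₂ + S⁻¹) * S = B₂ * (B₁ + N₂)⁻¹ + 1 := by
      rw [add_mul, hSinv, hSdef, mul_add, hBcO, add_zero]
    have key2 : (B₂ * (B₁ + N₂)⁻¹ + 1) * (B₁ + N₂) = B₂ + (B₁ + N₂) := by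
      rw [add_mul, one_mul, mul_assoc, hYinv', mul_one]
    have key3 : B₂ + (B₁ + N₂) = B₁ + B₂ + N₂ := by abel
    have d1 : (B₂ + S⁻¹).det * S.det * (B₁ + N₂).det = (B₁ + B₂ + N₂).det := by
      rw [← det_mul, key1, ← det_mul, key2, key3]
    have d2 : S⁻¹.det * S.det = 1 := by rw [← det_mul, hSinv, det_one]
    calc (B₂ + S⁻¹).det * (B₁ + N₂).det
        = (B₂ + S⁻¹).det * (B₁ + N₂).det * (S⁻¹.det * S.det) := by rw [d2, mul_one]
      _ = ((B₂ + S⁻¹).det * S.det * (B₁ + N₂).det) * S⁻¹.det := by ring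
      _ = (B₁ + B₂ + N₂).det * S⁻¹.det := by rw [d1]
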